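/- Let X be a hypergeometric random variable with distribution HG(N, m, r), and suppose its expectation μ = rm/N satisfies μ ≤ c for some real c > 0. Then for any threshold τ ≥ 11c such that τ/μ − 1 > 2e − 1, Pr[X ≥ τ] ≤ (1/2)^τ. -/

import Mathlib

-- ratio bound: descFactorial vs power
lemma aux_ratio (N : ℕ) : ∀ j m : ℕ, j ≤ m → m ≤ N →
    (m.descFactorial j : ℝ) * (N:ℝ)^j ≤ (m:ℝ)^j * (N.descFactorial j : ℝ) := by
  intro j
  induction j with
  | zero => intro m _ _; simp
  | succ j ih =>
    intro m hjm hmN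
    have hj : j ≤ m := Nat.le_of_succ_le hjm
    have hjN : j ≤ N := le_trans hj hmN
    rw [Nat.descFactorial_succ, Nat.descFactorial_succ]
    push_cast [Nat.sub_le_iff_le_add] at *
    have h1 : ((m:ℝ) - j) * (N:ℝ) ≤ (m:ℝ) * ((N:ℝ) - j) := by
      have : (j:ℝ) * m ≤ (j:ℝ) * N := by
        have : (m:ℝ) ≤ N := by exact_mod_cast hmN
        nlinarith [Nat.cast_nonneg (α := ℝ) j]
      nlinarith
    have h2 := ih m hj hmN
    have hm0 : (0:ℝ) ≤ (m:ℝ) - j := by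
      have : (j:ℝ) ≤ m := by exact_mod_cast hj
      linarith
    have hN0 : (0:ℝ) ≤ (N:ℝ) - j := by
      have : (j:ℝ) ≤ N := by exact_mod_cast hjN
      linarith
    have hcm : ((m - j : ℕ) : ℝ) = (m:ℝ) - j := by
      push_cast [hj]; ring
    have hcN : ((N - j : ℕ) : ℝ) = (N:ℝ) - j := by
      push_cast [hjN]; ring
    rw [hcm, hcN]
    have hd : (0:ℝ) ≤ (m.descFactorial j : ℝ) := by positivity
    have hNn : (0:ℝ) ≤ (N:ℝ) := by positivity
    have hmp : (0:ℝ) ≤ (m:ℝ)^j := by positivity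
    calc ((m:ℝ) - j) * (m.descFactorial j : ℝ) * (N:ℝ)^(j+1)
        = ((m:ℝ) - j) * (N:ℝ) * ((m.descFactorial j : ℝ) * (N:ℝ)^j) := by ring
      _ ≤ ((m:ℝ) - j) * (N:ℝ) * ((m:ℝ)^j * (N.descFactorial j : ℝ)) := by
          apply mul_le_mul_of_nonneg_left h2; positivity
      _ ≤ (m:ℝ) * ((N:ℝ) - j) * ((m:ℝ)^j * (N.descFactorial j : ℝ)) := by
          apply mul_le_mul_of_nonneg_right h1; positivity
      _ = (m:ℝ)^(j+1) * (((N:ℝ) - j) * (N.descFactorial j : ℝ)) := by ring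


-- j^j ≤ e^j * j!
lemma aux_fact (j : ℕ) : (j:ℝ)^j ≤ Real.exp 1 ^ j * (j.factorial : ℝ) := by
  have h := Real.sum_le_exp_of_nonneg (x := (j:ℝ)) (by positivity) (j+1)
  have hterm : (j:ℝ)^j / (j.factorial : ℝ) ≤ Real.exp j := by
    refine le_trans ?_ h
    refine Finset.single_le_sum (f := fun i => (j:ℝ)^i / (i.factorial : ℝ)) ?_ ?_
    · intro i _; positivity
    · simp
  have hexp : Real.exp (j : ℝ) = Real.exp 1 ^ j := by
    rw [← Real.exp_nat_mul]; norm_num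
  rw [hexp] at hterm
  have hf : (0:ℝ) < (j.factorial : ℝ) := by exact_mod_cast j.factorial_pos
  calc (j:ℝ)^j = (j:ℝ)^j / (j.factorial : ℝ) * (j.factorial : ℝ) := by field_simp
    _ ≤ Real.exp 1 ^ j * (j.factorial : ℝ) := by
        apply mul_le_mul_of_nonneg_right hterm hf.le

lemma aux_term (N m r j : ℕ) (hm : m ≤ N) (hr : r ≤ N) (hN : 0 < N) (hj : j ≤ r) :
    (m.choose j : ℝ) * ((N - m).choose (r - j) : ℝ) / (N.choose r : ℝ)
      ≤ ((r:ℝ) * m / N)^j / (j.factorial : ℝ) := by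
  rcases lt_or_ge m j with hmj | hjm
  · rw [Nat.choose_eq_zero_of_lt hmj]
    have : (0:ℝ) ≤ ((r:ℝ) * m / N)^j / (j.factorial : ℝ) := by positivity
    simpa using this
  have hjN : j ≤ N := le_trans hjm hm
  have hDNr : 0 < N.descFactorial r := Nat.pos_of_ne_zero fun h =>
    absurd (Nat.descFactorial_eq_zero_iff_lt.mp h) (by omega)
  have hDNj : 0 < N.descFactorial j := Nat.pos_of_ne_zero fun h =>
    absurd (Nat.descFactorial_eq_zero_iff_lt.mp h) (by omega)
  have hCNr : 0 < N.choose r := Nat.choose_pos hr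
  have hDrest : 0 < (N - j).descFactorial (r - j) := Nat.pos_of_ne_zero fun h =>
    absurd (Nat.descFactorial_eq_zero_iff_lt.mp h) (by omega)
  have hCNr' : (0:ℝ) < (N.choose r : ℝ) := by exact_mod_cast hCNr
  have hDNr' : (0:ℝ) < (N.descFactorial r : ℝ) := by exact_mod_cast hDNr
  have hDNj' : (0:ℝ) < (N.descFactorial j : ℝ) := by exact_mod_cast hDNj
  have hDrest' : (0:ℝ) < ((N - j).descFactorial (r - j) : ℝ) := by exact_mod_cast hDrest
  have key : (m.choose j : ℝ) * ((N - m).choose (r - j) : ℝ) / (N.choose r : ℝ)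
      = (r.choose j : ℝ) * (m.descFactorial j : ℝ) * ((N - m).descFactorial (r - j) : ℝ)
          / (N.descFactorial r : ℝ) := by
    have e1 : (N.descFactorial r : ℝ) = (r.factorial : ℝ) * (N.choose r : ℝ) := by
      exact_mod_cast congrArg (Nat.cast (R := ℝ)) (Nat.descFactorial_eq_factorial_mul_choose N r)
    have e2 : (m.descFactorial j : ℝ) = (j.factorial : ℝ) * (m.choose j : ℝ) := by
      exact_mod_cast congrArg (Nat.cast (R := ℝ)) (Nat.descFactorial_eq_factorial_mul_choose m j)
    have e3 : ((N - m).descFactorial (r - j) : ℝ)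
        = ((r - j).factorial : ℝ) * ((N - m).choose (r - j) : ℝ) := by
      exact_mod_cast congrArg (Nat.cast (R := ℝ))
        (Nat.descFactorial_eq_factorial_mul_choose (N - m) (r - j))
    have e4 : (r.choose j : ℝ) * (j.factorial : ℝ) * ((r - j).factorial : ℝ)
        = (r.factorial : ℝ) := by
      exact_mod_cast congrArg (Nat.cast (R := ℝ))
        (Nat.choose_mul_factorial_mul_factorial hj)
    rw [e1, e2, e3, div_eq_div_iff hCNr'.ne' (by positivity)]
    linear_combination (-((m.choose j : ℝ) * ((N - m).choose (r - j) : ℝ) * (N.choose r : ℝ))) * e4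
  rw [key]
  -- step: (N-m)_{r-j} ≤ (N-j)_{r-j}
  have s1 : ((N - m).descFactorial (r - j) : ℝ) ≤ ((N - j).descFactorial (r - j) : ℝ) := by
    exact_mod_cast Nat.descFactorial_le (r - j) (Nat.sub_le_sub_left hjm N)
  have hsplit : (N.descFactorial r : ℝ)
      = ((N - j).descFactorial (r - j) : ℝ) * (N.descFactorial j : ℝ) := by
    exact_mod_cast congrArg (Nat.cast (R := ℝ)) (Nat.descFactorial_mul_descFactorial hj).symm
  have step1 : (r.choose j : ℝ) * (m.descFactorial j : ℝ) * ((N - m).descFactorial (r - j) : ℝ)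
          / (N.descFactorial r : ℝ)
      ≤ (r.choose j : ℝ) * (m.descFactorial j : ℝ) / (N.descFactorial j : ℝ) := by
    rw [hsplit, div_le_div_iff₀ (by positivity) hDNj']
    have : (r.choose j : ℝ) * (m.descFactorial j : ℝ) * ((N - m).descFactorial (r - j) : ℝ)
        ≤ (r.choose j : ℝ) * (m.descFactorial j : ℝ) * ((N - j).descFactorial (r - j) : ℝ) :=
      mul_le_mul_of_nonneg_left s1 (by positivity)
    nlinarith [hDNj', this]
  refine le_trans step1 ?_
  -- step: (m)_j / (N)_j ≤ (m/N)^j, and C(r,j) ≤ r^j/j!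
  have s2 : (m.descFactorial j : ℝ) / (N.descFactorial j : ℝ) ≤ ((m:ℝ)/N)^j := by
    rw [div_le_iff₀ hDNj', div_pow, div_mul_eq_mul_div, le_div_iff₀ (by positivity)]
    have := aux_ratio N j m hjm hm
    nlinarith [this]
  have s3 : (r.choose j : ℝ) ≤ (r:ℝ)^j / (j.factorial : ℝ) := Nat.choose_le_pow_div j r
  have hfin : (r.choose j : ℝ) * (m.descFactorial j : ℝ) / (N.descFactorial j : ℝ)
      ≤ ((r:ℝ)^j / (j.factorial : ℝ)) * ((m:ℝ)/N)^j := by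
    rw [mul_div_assoc]
    apply mul_le_mul s3 s2 (by positivity) (by positivity)
  refine le_trans hfin (le_of_eq ?_)
  have hN' : (N:ℝ) ≠ 0 := by positivity
  have hf' : (j.factorial:ℝ) ≠ 0 := by positivity
  field_simp
  ring

/-- Combined hypergeometric tail bound: if `X ~ HG(N,m,r)` has expectation
`μ = r*m/N ≤ c` and `τ ≥ 11c` satisfies `τ/μ - 1 > 2e - 1`, then
`Pr[X ≥ τ] ≤ (1/2)^τ`. -/
theorem stmt_18 (N m r : ℕ) (hm : m ≤ N) (hr : r ≤ N) (hN : 0 < N)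
    (c τ : ℝ) (hc : 0 < c) (hμc : (r : ℝ) * m / N ≤ c) (hτ : τ ≥ 11 * c)
    (hδ : τ / ((r : ℝ) * m / N) - 1 > 2 * Real.exp 1 - 1) :
    (∑ j ∈ Finset.range (r + 1),
        if τ ≤ (j : ℝ) then
          ((m.choose j : ℝ) * ((N - m).choose (r - j) : ℝ) / (N.choose r : ℝ))
        else 0)
      ≤ ((1 : ℝ) / 2) ^ τ := by
  set μ : ℝ := (r : ℝ) * m / N with hμdef
  have hμnn : 0 ≤ μ := by positivity
  have hτ0 : 0 < τ := lt_of_lt_of_le (by linarith) hτ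
  have hμτ : μ ≤ τ / 11 := by linarith
  have hstep1 : ∀ j : ℕ, j ≤ r →
      (m.choose j : ℝ) * ((N - m).choose (r - j) : ℝ) / (N.choose r : ℝ)
        ≤ μ ^ j / (j.factorial : ℝ) := fun j hj => aux_term N m r j hm hr hN hj
  clear_value μ
  clear hμdef hμc hδ hτ hc c
  have he : (0:ℝ) < Real.exp 1 := Real.exp_pos 1
  have he9 : Real.exp 1 < 2.7182818286 := Real.exp_one_lt_d9
  set k : ℕ := ⌈τ⌉₊ with hkdef
  have hk1 : 1 ≤ k := Nat.one_le_iff_ne_zero.mpr (by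
    intro h
    have : τ ≤ 0 := by exact_mod_cast Nat.ceil_eq_zero.mp h
    linarith)
  have hτk : τ ≤ (k : ℝ) := Nat.le_ceil τ
  have hrp : (0:ℝ) ≤ ((1:ℝ)/2) ^ τ := Real.rpow_nonneg (by norm_num) τ
  -- termwise bound
  have hterm : ∀ j ∈ Finset.range (r + 1),
      (if τ ≤ (j : ℝ) then
          ((m.choose j : ℝ) * ((N - m).choose (r - j) : ℝ) / (N.choose r : ℝ))
        else 0)
      ≤ (if k ≤ j then (Real.exp 1 / 11) * (1/4 : ℝ)^(j-1) else 0) := by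
    intro j hjr
    have hjr' : j ≤ r := Nat.lt_succ_iff.mp (Finset.mem_range.mp hjr)
    have hiff : (τ ≤ (j : ℝ)) ↔ (k ≤ j) := (Nat.ceil_le).symm
    by_cases hcond : τ ≤ (j : ℝ)
    · rw [if_pos hcond, if_pos (hiff.mp hcond)]
      have hj1 : 1 ≤ j := by
        rcases Nat.eq_zero_or_pos j with h0 | h
        · rw [h0] at hcond; norm_num at hcond; linarith
        · exact h
      have hj0 : (0:ℝ) < (j:ℝ) := by exact_mod_cast hj1
      have hf0 : (0:ℝ) < (j.factorial : ℝ) := by exact_mod_cast j.factorial_pos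
      have step2 : μ ^ j / (j.factorial : ℝ) ≤ (Real.exp 1 * μ / (j:ℝ)) ^ j := by
        have hexpand : (Real.exp 1 * μ / (j:ℝ)) ^ j
            = (Real.exp 1 ^ j * (j.factorial : ℝ)) * (μ ^ j / (j.factorial : ℝ)) / ((j:ℝ))^j := by
          have hE : Real.exp ((j:ℕ):ℝ) = Real.exp 1 ^ j := by
            rw [← Real.exp_nat_mul, mul_one]
          field_simp
          rw [div_pow, mul_pow, div_mul_cancel₀ _ (pow_ne_zero j hj0.ne')]
        rw [hexpand, le_div_iff₀ (by positivity)]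
        have h1 : (j:ℝ)^j ≤ Real.exp 1 ^ j * (j.factorial : ℝ) := aux_fact j
        have h2 : (0:ℝ) ≤ μ ^ j / (j.factorial : ℝ) := by positivity
        nlinarith [mul_le_mul_of_nonneg_left h1 h2]
      have hbase : Real.exp 1 * μ / (j:ℝ) ≤ Real.exp 1 / 11 := by
        rw [div_le_div_iff₀ hj0 (by norm_num)]
        have hτj : τ ≤ (j:ℝ) := hcond
        nlinarith
      have step3 : (Real.exp 1 * μ / (j:ℝ)) ^ j ≤ (Real.exp 1 / 11) ^ j :=
        pow_le_pow_left₀ (by positivity) hbase j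
      have step4 : (Real.exp 1 / 11) ^ j ≤ (Real.exp 1 / 11) * (1/4 : ℝ)^(j-1) := by
        have hsplitj : (Real.exp 1 / 11) ^ j
            = (Real.exp 1 / 11) * (Real.exp 1 / 11) ^ (j-1) := by
          conv_lhs => rw [show j = 1 + (j - 1) by omega, pow_add, pow_one]
        rw [hsplitj]
        apply mul_le_mul_of_nonneg_left _ (by positivity)
        apply pow_le_pow_left₀ (by positivity) (by nlinarith)
      have := hstep1 j hjr'
      linarith
    · rw [if_neg hcond, if_neg (fun h => hcond (hiff.mpr h))]
  refine le_trans (Finset.sum_le_sum hterm) ?_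
  have hfilter : (Finset.range (r+1)).filter (fun j => k ≤ j) = Finset.Ico k (r+1) := by
    ext x; simp [Finset.mem_filter, Finset.mem_Ico, Finset.mem_range]; omega
  rw [← Finset.sum_filter, hfilter, Finset.sum_Ico_eq_sum_range]
  have hgeom : ∑ i ∈ Finset.range (r + 1 - k), (1/4 : ℝ)^i ≤ 4/3 := by
    rw [geom_sum_eq (by norm_num : (1/4:ℝ) ≠ 1)]
    rw [div_le_iff_of_neg (by norm_num : (1/4:ℝ) - 1 < 0)]
    have : (0:ℝ) ≤ (1/4:ℝ)^(r+1-k) := by positivity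
    nlinarith
  have hsum : ∑ i ∈ Finset.range (r + 1 - k), (Real.exp 1 / 11) * (1/4 : ℝ)^(k + i - 1)
      ≤ (Real.exp 1 / 11) * (1/4 : ℝ)^(k-1) * (4/3) := by
    have heq : ∀ i : ℕ, (1/4 : ℝ)^(k + i - 1) = (1/4 : ℝ)^(k-1) * (1/4 : ℝ)^i := by
      intro i; rw [← pow_add]; congr 1; omega
    calc ∑ i ∈ Finset.range (r + 1 - k), (Real.exp 1 / 11) * (1/4 : ℝ)^(k + i - 1)
        = (Real.exp 1 / 11) * (1/4 : ℝ)^(k-1) * ∑ i ∈ Finset.range (r + 1 - k), (1/4 : ℝ)^i := by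
          rw [Finset.mul_sum]; apply Finset.sum_congr rfl; intro i _; rw [heq i]; ring
      _ ≤ (Real.exp 1 / 11) * (1/4 : ℝ)^(k-1) * (4/3) :=
          mul_le_mul_of_nonneg_left hgeom (by positivity)
  refine le_trans hsum ?_
  -- (1/4)^(k-1) ≤ 2 * (1/2)^τ
  have hq : (1/4 : ℝ)^(k-1) ≤ 2 * ((1:ℝ)/2) ^ τ := by
    rcases eq_or_lt_of_le hk1 with h1 | h2
    · -- k = 1
      have hτ1 : τ ≤ 1 := by rw [← h1] at hτk; exact_mod_cast hτk
      have : ((1:ℝ)/2) ^ (1:ℝ) ≤ ((1:ℝ)/2) ^ τ :=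
        Real.rpow_le_rpow_of_exponent_ge (by norm_num) (by norm_num) hτ1
      rw [Real.rpow_one] at this
      rw [← h1]
      norm_num
      linarith
    · -- 2 ≤ k
      have hk2 : 2 ≤ k := h2
      have e1 : (1/4 : ℝ)^(k-1) = ((1:ℝ)/2)^(2*(k-1)) := by
        rw [pow_mul]; norm_num
      have e2 : ((1:ℝ)/2)^(2*(k-1)) ≤ ((1:ℝ)/2)^k :=
        pow_le_pow_of_le_one (by norm_num) (by norm_num) (by omega)
      have e3 : ((1:ℝ)/2)^(k:ℕ) = ((1:ℝ)/2)^((k:ℕ):ℝ) := (Real.rpow_natCast _ _).symm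
      have e4 : ((1:ℝ)/2)^((k:ℕ):ℝ) ≤ ((1:ℝ)/2) ^ τ :=
        Real.rpow_le_rpow_of_exponent_ge (by norm_num) (by norm_num) hτk
      rw [e1]
      calc ((1:ℝ)/2)^(2*(k-1)) ≤ ((1:ℝ)/2)^(k:ℕ) := e2
        _ = ((1:ℝ)/2)^((k:ℕ):ℝ) := e3
        _ ≤ ((1:ℝ)/2) ^ τ := e4
        _ ≤ 2 * ((1:ℝ)/2) ^ τ := by linarith
  calc (Real.exp 1 / 11) * (1/4 : ℝ)^(k-1) * (4/3)
      ≤ (Real.exp 1 / 11) * (2 * ((1:ℝ)/2) ^ τ) * (4/3) := by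
        apply mul_le_mul_of_nonneg_right _ (by norm_num)
        exact mul_le_mul_of_nonneg_left hq (by positivity)
    _ ≤ ((1:ℝ)/2) ^ τ := by nlinarith
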